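/- Let P₊, P₋ be complex d_A×d_A orthogonal projection matrices with P₊P₋ = 0, let Q₊, Q₋ be complex d_B×d_B orthogonal projection matrices with Q₊Q₋ = 0, and let ψ ∈ ℂ^{d_A·d_B} be a unit vector with (P₊⊗Q₊ + P₋⊗Q₋)ψ = ψ. Then there exist a finite index set L, positive reals (α_l)_{l∈L} with Σ_l α_l² = 1, orthonormal vectors (u_l)_{l∈L} in ℂ^{d_A}, orthonormal vectors (v_l)_{l∈L} in ℂ^{d_B}, and signs (Δ_l)_{l∈L} ∈ {+,−}^L, such that ψ = Σ_{l∈L} α_l (u_l ⊗ v_l) and for every l ∈ L one has P_{Δ_l} u_l = u_l and Q_{Δ_l} v_l = v_l. -/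

import Mathlib

open Matrix Kronecker

namespace PQSSAux

lemma sum_dotProduct' {n m : Type*} [Fintype n] [Fintype m] (f : n → (m → ℂ)) (w : m → ℂ) :
    (∑ l, f l) ⬝ᵥ w = ∑ l, f l ⬝ᵥ w := by
  simp only [dotProduct, Finset.sum_apply, Finset.sum_mul]
  exact Finset.sum_comm

lemma dotProduct_sum' {n m : Type*} [Fintype n] [Fintype m] (w : m → ℂ) (f : n → (m → ℂ)) :
    w ⬝ᵥ (∑ l, f l) = ∑ l, w ⬝ᵥ f l := by
  simp only [dotProduct, Finset.sum_apply, Finset.mul_sum]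
  exact Finset.sum_comm

lemma dot_kron {dA dB : ℕ} (u u' : Fin dA → ℂ) (v v' : Fin dB → ℂ) :
    star (fun p : Fin dA × Fin dB => u p.1 * v p.2) ⬝ᵥ
      (fun p : Fin dA × Fin dB => u' p.1 * v' p.2)
      = (star u ⬝ᵥ u') * (star v ⬝ᵥ v') := by
  simp only [dotProduct, Pi.star_apply, Fintype.sum_prod_type, Finset.sum_mul_sum]
  refine Finset.sum_congr rfl fun a _ => Finset.sum_congr rfl fun b _ => ?_
  simp only [star_mul']
  ring

lemma dot_self_of_decomp {dA dB : ℕ} {n : ℕ} (α : Fin n → ℝ)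
    (u : Fin n → Fin dA → ℂ) (v : Fin n → Fin dB → ℂ)
    (hu : ∀ l l', star (u l) ⬝ᵥ u l' = if l = l' then 1 else 0)
    (hv : ∀ l l', star (v l) ⬝ᵥ v l' = if l = l' then 1 else 0)
    (φ : Fin dA × Fin dB → ℂ)
    (hφ : φ = ∑ l, (α l : ℂ) • fun p : Fin dA × Fin dB => u l p.1 * v l p.2) :
    star φ ⬝ᵥ φ = ((∑ l, (α l) ^ 2 : ℝ) : ℂ) := by
  subst hφ
  rw [star_sum, sum_dotProduct']
  have key : ∀ l : Fin n,
      star ((α l : ℂ) • fun p : Fin dA × Fin dB => u l p.1 * v l p.2) ⬝ᵥ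
        (∑ l', (α l' : ℂ) • fun p : Fin dA × Fin dB => u l' p.1 * v l' p.2)
      = ((α l : ℝ) ^ 2 : ℂ) := by
    intro l
    rw [dotProduct_sum']
    have : ∀ l' : Fin n,
        star ((α l : ℂ) • fun p : Fin dA × Fin dB => u l p.1 * v l p.2) ⬝ᵥ
          ((α l' : ℂ) • fun p : Fin dA × Fin dB => u l' p.1 * v l' p.2)
        = if l = l' then ((α l : ℝ) ^ 2 : ℂ) else 0 := by
      intro l'
      rw [star_smul, smul_dotProduct, dotProduct_smul, dot_kron, hu, hv]
      by_cases h : l = l'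
      · subst h; simp [← Complex.ofReal_pow]; push_cast; ring
      · simp [h]
    simp only [this, Finset.sum_ite_eq, Finset.mem_univ, if_true]
  simp only [key]
  push_cast
  ring


lemma dot_eq_zero_of_proj {d : ℕ} (P P' : Matrix (Fin d) (Fin d) ℂ)
    (hP : P.IsHermitian) (hPP' : P * P' = 0)
    (u u' : Fin d → ℂ) (hu : P *ᵥ u = u) (hu' : P' *ᵥ u' = u') :
    star u ⬝ᵥ u' = 0 := by
  calc star u ⬝ᵥ u' = star (P *ᵥ u) ⬝ᵥ (P' *ᵥ u') := by rw [hu, hu']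
    _ = (star u ᵥ* P) ⬝ᵥ (P' *ᵥ u') := by rw [star_mulVec, hP.eq]
    _ = ((star u ᵥ* P) ᵥ* P') ⬝ᵥ u' := by rw [dotProduct_mulVec]
    _ = (star u ᵥ* (P * P')) ⬝ᵥ u' := by rw [vecMul_vecMul]
    _ = 0 := by rw [hPP', vecMul_zero, zero_dotProduct]

lemma castAdd_ne_natAdd {np nm : ℕ} (i : Fin np) (j : Fin nm) :
    (Fin.castAdd nm i : Fin (np + nm)) ≠ Fin.natAdd np j := by
  intro hc
  have h := congrArg Fin.val hc
  simp only [Fin.coe_castAdd, Fin.coe_natAdd] at h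
  have := i.isLt
  omega

lemma combined_orth {d np nm : ℕ} (fp : Fin np → Fin d → ℂ) (fm : Fin nm → Fin d → ℂ)
    (hpp : ∀ l l', star (fp l) ⬝ᵥ fp l' = if l = l' then 1 else 0)
    (hmm : ∀ l l', star (fm l) ⬝ᵥ fm l' = if l = l' then 1 else 0)
    (hpm : ∀ l r, star (fp l) ⬝ᵥ fm r = 0)
    (hmp : ∀ r l, star (fm r) ⬝ᵥ fp l = 0)
    (l l' : Fin (np + nm)) :
    star ((Fin.addCases fp fm : ∀ _ : Fin (np + nm), Fin d → ℂ) l) ⬝ᵥ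
      (Fin.addCases fp fm : ∀ _ : Fin (np + nm), Fin d → ℂ) l' = if l = l' then 1 else 0 := by
  induction l using Fin.addCases with
  | left i =>
    induction l' using Fin.addCases with
    | left j =>
      simp only [Fin.addCases_left]
      rw [hpp]
      congr 1
      simp [Fin.ext_iff]
    | right j =>
      simp only [Fin.addCases_left, Fin.addCases_right]
      rw [hpm, if_neg (castAdd_ne_natAdd i j)]
  | right i =>
    induction l' using Fin.addCases with
    | left j =>
      simp only [Fin.addCases_left, Fin.addCases_right]
      rw [hmp, if_neg fun hc => castAdd_ne_natAdd j i hc.symm]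
    | right j =>
      simp only [Fin.addCases_right]
      rw [hmm]
      congr 1
      simp [Fin.ext_iff]



lemma schmidt_aux {dA dB : ℕ}
    (P : Matrix (Fin dA) (Fin dA) ℂ) (hP : P.IsHermitian) (hP2 : P * P = P)
    (Q : Matrix (Fin dB) (Fin dB) ℂ) (hQ : Q.IsHermitian) (hQ2 : Q * Q = Q)
    (φ : Fin dA × Fin dB → ℂ) (hφ : (P ⊗ₖ Q) *ᵥ φ = φ) :
    ∃ (n : ℕ) (α : Fin n → ℝ) (u : Fin n → Fin dA → ℂ) (v : Fin n → Fin dB → ℂ),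
      (∀ l, 0 < α l) ∧
      (∀ l l', star (u l) ⬝ᵥ u l' = if l = l' then 1 else 0) ∧
      (∀ l l', star (v l) ⬝ᵥ v l' = if l = l' then 1 else 0) ∧
      (φ = ∑ l, (α l : ℂ) • fun p : Fin dA × Fin dB => u l p.1 * v l p.2) ∧
      (∀ l, P *ᵥ u l = u l) ∧ (∀ l, Q *ᵥ v l = v l) := by
  classical
  set M : Matrix (Fin dA) (Fin dB) ℂ := Matrix.of fun a b => φ (a, b) with hMdef
  have hPI : (P ⊗ₖ (1 : Matrix (Fin dB) (Fin dB) ℂ)) *ᵥ φ = φ := by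
    conv_lhs => rw [← hφ]
    rw [mulVec_mulVec, ← mul_kronecker_mul, hP2, Matrix.one_mul, hφ]
  have hIQ : ((1 : Matrix (Fin dA) (Fin dA) ℂ) ⊗ₖ Q) *ᵥ φ = φ := by
    conv_lhs => rw [← hφ]
    rw [mulVec_mulVec, ← mul_kronecker_mul, hQ2, Matrix.one_mul, hφ]
  have hPM : P * M = M := by
    ext a b
    have h1 := congrFun hPI (a, b)
    simp only [mulVec, dotProduct, Fintype.sum_prod_type, kroneckerMap_apply, one_apply,
      mul_ite, ite_mul, mul_one, mul_zero, zero_mul, Finset.sum_ite_eq, Finset.sum_ite_eq',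
      Finset.mem_univ, if_true] at h1
    simpa [Matrix.mul_apply, hMdef, mulVec, dotProduct] using h1
  have hMQ : M * Qᵀ = M := by
    ext a b
    have h1 := congrFun hIQ (a, b)
    simp only [mulVec, dotProduct, Fintype.sum_prod_type, kroneckerMap_apply, one_apply,
      mul_ite, ite_mul, mul_one, mul_zero, zero_mul, Finset.sum_ite_eq, Finset.sum_ite_eq',
      Finset.mem_univ, if_true] at h1
    simpa [Matrix.mul_apply, hMdef, mulVec, dotProduct, transpose_apply, mul_comm] using h1
  set A : Matrix (Fin dA) (Fin dA) ℂ := M * Mᴴ with hAdef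
  have hA : A.IsHermitian := isHermitian_mul_conjTranspose_self M
  have hPA : P * A = A := by rw [hAdef, ← Matrix.mul_assoc, hPM]
  have hQM : Qᵀ * Mᴴ = Mᴴ := by
    have h2 := congrArg conjTranspose hMQ
    have hQT : Qᵀᴴ = Qᵀ := by
      ext i j
      simp only [conjTranspose_apply, transpose_apply]
      exact hQ.apply j i
    rwa [conjTranspose_mul, hQT] at h2
  set e : Fin dA → Fin dA → ℂ := fun i => ⇑(hA.eigenvectorBasis i) with hedef
  set μ : Fin dA → ℝ := hA.eigenvalues with hμdef
  have heig : ∀ i, A *ᵥ e i = μ i • e i := fun i => hA.mulVec_eigenvectorBasis i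
  have horth : ∀ i j, star (e i) ⬝ᵥ e j = if i = j then 1 else 0 := by
    intro i j
    have h2 := orthonormal_iff_ite.mp hA.eigenvectorBasis.orthonormal i j
    rw [EuclideanSpace.inner_eq_star_dotProduct] at h2
    rw [dotProduct_comm] at h2
    simpa [hedef] using h2
  have hcomp : ∀ a c : Fin dA, (∑ i, e i a * star (e i c)) = if a = c then 1 else 0 := by
    intro a c
    have hU : (hA.eigenvectorUnitary : Matrix (Fin dA) (Fin dA) ℂ) *
        star (hA.eigenvectorUnitary : Matrix (Fin dA) (Fin dA) ℂ) = 1 :=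
      mem_unitaryGroup_iff.mp hA.eigenvectorUnitary.2
    have h3 := congrFun (congrFun hU a) c
    simp only [Matrix.mul_apply, Matrix.one_apply, Matrix.star_apply,
      Matrix.conjTranspose_apply, IsHermitian.eigenvectorUnitary_apply] at h3
    simpa [hedef] using h3
  set w : Fin dA → Fin dB → ℂ := fun i => Mᴴ *ᵥ e i with hwdef
  have hkey : ∀ x y : Fin dA → ℂ, star (Mᴴ *ᵥ x) ⬝ᵥ (Mᴴ *ᵥ y) = star x ⬝ᵥ (A *ᵥ y) := by
    intro x y
    rw [star_mulVec, conjTranspose_conjTranspose, dotProduct_mulVec, vecMul_vecMul,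
      ← dotProduct_mulVec, hAdef]
  have hww : ∀ i j, star (w i) ⬝ᵥ w j = (μ j : ℂ) * (if i = j then 1 else 0) := by
    intro i j
    rw [hwdef]
    simp only
    rw [hkey, heig, dotProduct_smul, horth]
    rw [Complex.real_smul]
  have h1 : ∀ i, (μ i : ℂ) = ((∑ b, Complex.normSq (w i b) : ℝ) : ℂ) := by
    intro i
    have h := hww i i
    simp only [eq_self_iff_true, if_true, mul_one] at h
    rw [← h]
    simp only [dotProduct, Pi.star_apply]
    push_cast
    exact Finset.sum_congr rfl fun b _ => by
      rw [Complex.star_def, ← Complex.normSq_eq_conj_mul_self]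
  have h2 : ∀ i, μ i = ∑ b, Complex.normSq (w i b) := fun i =>
    Complex.ofReal_inj.mp (h1 i)
  have hμnn : ∀ i, 0 ≤ μ i := fun i => by
    rw [h2 i]; exact Finset.sum_nonneg fun b _ => Complex.normSq_nonneg _
  have hw0 : ∀ i, μ i = 0 → w i = 0 := by
    intro i h0
    have hs : ∑ b, Complex.normSq (w i b) = 0 := by rw [← h2, h0]
    funext b
    have := (Finset.sum_eq_zero_iff_of_nonneg
      (fun b _ => Complex.normSq_nonneg (w i b))).mp hs b (Finset.mem_univ b)
    exact Complex.normSq_eq_zero.mp this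
  -- eigenvectors with positive eigenvalue are fixed by P
  have hPu : ∀ i : Fin dA, 0 < μ i → P *ᵥ e i = e i := by
    intro i hi
    have hei : e i = (μ i)⁻¹ • (A *ᵥ e i) := by
      rw [heig, smul_smul, inv_mul_cancel₀ hi.ne', one_smul]
    conv_lhs => rw [hei]
    rw [mulVec_smul, mulVec_mulVec, hPA, ← hei]
  have hQw : ∀ i : Fin dA, Q *ᵥ star (w i) = star (w i) := by
    intro i
    have hQw' : Qᵀ *ᵥ w i = w i := by
      rw [hwdef]
      simp only
      rw [mulVec_mulVec, hQM]
    funext b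
    calc (Q *ᵥ star (w i)) b = star ((Qᵀ *ᵥ w i) b) := by
          simp only [mulVec, dotProduct, Pi.star_apply, star_sum, star_mul', star_star,
            transpose_apply, hQ.apply]
      _ = star (w i b) := by rw [hQw']
  -- index the positive eigenvalues
  set g : Fin (Fintype.card {i : Fin dA // 0 < μ i}) ≃ {i : Fin dA // 0 < μ i} :=
    (Fintype.equivFin {i : Fin dA // 0 < μ i}).symm with hg
  have hgcoe : ∀ l l', ((g l : Fin dA) = (g l' : Fin dA)) ↔ l = l' := by
    intro l l'
    rw [Subtype.coe_inj, EmbeddingLike.apply_eq_iff_eq]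
  refine ⟨Fintype.card {i : Fin dA // 0 < μ i}, fun l => Real.sqrt (μ (g l)),
    fun l => e (g l),
    fun l => ((Real.sqrt (μ (g l)) : ℂ))⁻¹ • star (w (g l)), ?_, ?_, ?_, ?_, ?_, ?_⟩
  · exact fun l => Real.sqrt_pos.mpr (g l).2
  · intro l l'
    rw [horth]
    simp only [hgcoe]
  · intro l l'
    rw [star_smul, smul_dotProduct, dotProduct_smul, star_star, star_inv₀]
    rw [dotProduct_comm, hww]
    rw [Complex.star_def, Complex.conj_ofReal]
    by_cases h : l = l'
    · subst h
      simp only [eq_self_iff_true, if_true, mul_one, smul_eq_mul]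
      have h0 : (0:ℝ) < μ (g l) := (g l).2
      norm_cast
      rw [← Real.mul_self_sqrt h0.le]
      field_simp
      rw [Real.sqrt_sq (Real.sqrt_nonneg _)]
    · have h' : ¬ ((g l' : Fin dA) = (g l : Fin dA)) := by
        rw [hgcoe]; exact fun hc => h hc.symm
      simp [h, h']
  · funext p
    obtain ⟨a, b⟩ := p
    have hterm : ∀ l, ((Real.sqrt (μ (g l)) : ℂ)) •
        (fun q : Fin dA × Fin dB => e (g l) q.1 *
          (((Real.sqrt (μ (g l)) : ℂ))⁻¹ • star (w (g l))) q.2) (a, b)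
        = e (g l) a * star (w (g l) b) := by
      intro l
      have hne : ((Real.sqrt (μ (g l)) : ℂ)) ≠ 0 := by
        norm_cast
        exact (Real.sqrt_pos.mpr (g l).2).ne'
      simp only [Pi.smul_apply, Pi.star_apply, smul_eq_mul]
      field_simp
    rw [Finset.sum_apply]
    have hsum : (∑ l, (((Real.sqrt (μ (g l)) : ℂ)) •
        fun q : Fin dA × Fin dB => e (g l) q.1 *
          (((Real.sqrt (μ (g l)) : ℂ))⁻¹ • star (w (g l))) q.2) (a, b))
        = ∑ i : Fin dA, e i a * star (w i b) :=
      calc (∑ l, (((Real.sqrt (μ (g l)) : ℂ)) •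
          fun q : Fin dA × Fin dB => e (g l) q.1 *
            (((Real.sqrt (μ (g l)) : ℂ))⁻¹ • star (w (g l))) q.2) (a, b))
          = ∑ l, e (g l) a * star (w (g l) b) := Finset.sum_congr rfl fun l _ => hterm l
        _ = ∑ s : {i : Fin dA // 0 < μ i}, e (s : Fin dA) a * star (w (s : Fin dA) b) :=
            Equiv.sum_comp g (fun s : {i : Fin dA // 0 < μ i} =>
              e (s : Fin dA) a * star (w (s : Fin dA) b))
        _ = ∑ i ∈ Finset.univ.filter (fun i => 0 < μ i), e i a * star (w i b) :=
            (Finset.sum_subtype (Finset.univ.filter fun i => 0 < μ i) (fun x => by simp)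
              (fun i => e i a * star (w i b))).symm
        _ = ∑ i : Fin dA, e i a * star (w i b) := by
            refine Finset.sum_filter_of_ne fun i _ hne => ?_
            by_contra hle
            have h0 : μ i = 0 := le_antisymm (not_lt.mp hle) (hμnn i)
            rw [hw0 i h0] at hne
            simp at hne
    rw [hsum]
    have hstarw : ∀ i, star (w i b) = ∑ c, M c b * star (e i c) := by
      intro i
      rw [hwdef]
      simp only [mulVec, dotProduct, conjTranspose_apply, star_sum, star_mul', star_star,
        Pi.star_apply]
    calc φ (a, b) = M a b := rfl
      _ = ∑ c, M c b * ((∑ i, e i a * star (e i c))) := by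
          simp only [hcomp, mul_ite, mul_one, mul_zero]
          rw [Finset.sum_ite_eq Finset.univ a (fun c => M c b)]
          simp
      _ = ∑ c, ∑ i, M c b * (e i a * star (e i c)) := by
          refine Finset.sum_congr rfl fun c _ => ?_
          rw [Finset.mul_sum]
      _ = ∑ i, ∑ c, M c b * (e i a * star (e i c)) := Finset.sum_comm
      _ = ∑ i, e i a * star (w i b) := by
          refine Finset.sum_congr rfl fun i _ => ?_
          rw [hstarw, Finset.mul_sum]
          exact Finset.sum_congr rfl fun c _ => by ring
  · exact fun l => hPu _ (g l).2
  · intro l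
    rw [mulVec_smul, hQw]

end PQSSAux

set_option maxHeartbeats 1000000 in
theorem pqss_schmidt_decomposition
    {dA dB : ℕ}
    (Pp Pm : Matrix (Fin dA) (Fin dA) ℂ)
    (hPp : Pp.IsHermitian) (hPp2 : Pp * Pp = Pp)
    (hPm : Pm.IsHermitian) (hPm2 : Pm * Pm = Pm)
    (hPpm : Pp * Pm = 0)
    (Qp Qm : Matrix (Fin dB) (Fin dB) ℂ)
    (hQp : Qp.IsHermitian) (hQp2 : Qp * Qp = Qp)
    (hQm : Qm.IsHermitian) (hQm2 : Qm * Qm = Qm)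
    (hQpm : Qp * Qm = 0)
    (ψ : Fin dA × Fin dB → ℂ) (hψ : star ψ ⬝ᵥ ψ = 1)
    (h : (Pp ⊗ₖ Qp + Pm ⊗ₖ Qm) *ᵥ ψ = ψ) :
    ∃ (L : ℕ) (α : Fin L → ℝ) (u : Fin L → Fin dA → ℂ) (v : Fin L → Fin dB → ℂ)
      (Δ : Fin L → Bool),
      (∀ l, 0 < α l) ∧
      (∑ l, (α l) ^ 2 = 1) ∧
      (∀ l l', star (u l) ⬝ᵥ u l' = if l = l' then 1 else 0) ∧
      (∀ l l', star (v l) ⬝ᵥ v l' = if l = l' then 1 else 0) ∧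
      (ψ = ∑ l, (α l : ℂ) • fun p : Fin dA × Fin dB => u l p.1 * v l p.2) ∧
      (∀ l, (if Δ l then Pp else Pm) *ᵥ u l = u l) ∧
      (∀ l, (if Δ l then Qp else Qm) *ᵥ v l = v l) := by
  classical
  have hPmp : Pm * Pp = 0 := by
    have h2 := congrArg conjTranspose hPpm
    rwa [conjTranspose_mul, hPp.eq, hPm.eq, conjTranspose_zero] at h2
  have hQmp : Qm * Qp = 0 := by
    have h2 := congrArg conjTranspose hQpm
    rwa [conjTranspose_mul, hQp.eq, hQm.eq, conjTranspose_zero] at h2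
  set ψp := (Pp ⊗ₖ Qp) *ᵥ ψ with hψpdef
  set ψm := (Pm ⊗ₖ Qm) *ᵥ ψ with hψmdef
  have hsplit : ψ = ψp + ψm := by rw [hψpdef, hψmdef, ← add_mulVec, h]
  have hfixp : (Pp ⊗ₖ Qp) *ᵥ ψp = ψp := by
    rw [hψpdef, mulVec_mulVec, ← mul_kronecker_mul, hPp2, hQp2]
  have hfixm : (Pm ⊗ₖ Qm) *ᵥ ψm = ψm := by
    rw [hψmdef, mulVec_mulVec, ← mul_kronecker_mul, hPm2, hQm2]
  obtain ⟨np, αp, up, vp, hαp, hup, hvp, hdp, hPup, hQvp⟩ :=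
    PQSSAux.schmidt_aux Pp hPp hPp2 Qp hQp hQp2 ψp hfixp
  obtain ⟨nm, αm, um, vm, hαm, hum, hvm, hdm, hPum, hQvm⟩ :=
    PQSSAux.schmidt_aux Pm hPm hPm2 Qm hQm hQm2 ψm hfixm
  have hupum : ∀ l r, star (up l) ⬝ᵥ um r = 0 := fun l r =>
    PQSSAux.dot_eq_zero_of_proj Pp Pm hPp hPpm _ _ (hPup l) (hPum r)
  have humup : ∀ r l, star (um r) ⬝ᵥ up l = 0 := fun r l =>
    PQSSAux.dot_eq_zero_of_proj Pm Pp hPm hPmp _ _ (hPum r) (hPup l)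
  have hvpvm : ∀ l r, star (vp l) ⬝ᵥ vm r = 0 := fun l r =>
    PQSSAux.dot_eq_zero_of_proj Qp Qm hQp hQpm _ _ (hQvp l) (hQvm r)
  have hvmvp : ∀ r l, star (vm r) ⬝ᵥ vp l = 0 := fun r l =>
    PQSSAux.dot_eq_zero_of_proj Qm Qp hQm hQmp _ _ (hQvm r) (hQvp l)
  have hucorth := PQSSAux.combined_orth up um hup hum hupum humup
  have hvcorth := PQSSAux.combined_orth vp vm hvp hvm hvpvm hvmvp
  have hdecomp : ψ = ∑ l : Fin (np + nm),
      ((Fin.addCases αp αm l : ℝ) : ℂ) • fun p : Fin dA × Fin dB =>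
        (Fin.addCases up um : ∀ _ : Fin (np + nm), Fin dA → ℂ) l p.1 *
        (Fin.addCases vp vm : ∀ _ : Fin (np + nm), Fin dB → ℂ) l p.2 := by
    rw [hsplit, hdp, hdm, Fin.sum_univ_add]
    congr 1
    · refine Finset.sum_congr rfl fun l _ => ?_
      simp only [Fin.addCases_left]
    · refine Finset.sum_congr rfl fun l _ => ?_
      simp only [Fin.addCases_right]
  have hsum : ∑ l : Fin (np + nm), (Fin.addCases αp αm l : ℝ) ^ 2 = 1 := by
    have hc := PQSSAux.dot_self_of_decomp (Fin.addCases αp αm) _ _ hucorth hvcorth ψ hdecomp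
    rw [hψ] at hc
    exact_mod_cast hc.symm
  refine ⟨np + nm, Fin.addCases αp αm,
    (Fin.addCases up um : ∀ _ : Fin (np + nm), Fin dA → ℂ),
    (Fin.addCases vp vm : ∀ _ : Fin (np + nm), Fin dB → ℂ),
    (Fin.addCases (fun _ => true) (fun _ => false) : Fin (np + nm) → Bool),
    ?_, ?_, ?_, ?_, ?_, ?_, ?_⟩
  · intro l
    induction l using Fin.addCases with
    | left i => simp only [Fin.addCases_left]; exact hαp i
    | right i => simp only [Fin.addCases_right]; exact hαm i
  · exact hsum
  · exact hucorth
  · exact hvcorth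
  · exact hdecomp
  · intro l
    induction l using Fin.addCases with
    | left i => simp only [Fin.addCases_left, if_true]; exact hPup i
    | right i =>
      simp only [Fin.addCases_right, Bool.false_eq_true, if_false]
      exact hPum i
  · intro l
    induction l using Fin.addCases with
    | left i => simp only [Fin.addCases_left, if_true]; exact hQvp i
    | right i =>
      simp only [Fin.addCases_right, Bool.false_eq_true, if_false]
      exact hQvm i
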